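/- Let f be piecewise C¹ with compact support. Then the function ℓ ↦ p.v.∫ f(ℓ−k)/k dk is continuous; in fact the truncated integrals F_ε converge uniformly, with |lim_{δ→0⁺}F_δ(ℓ) − F_ε(ℓ)| ≤ 2ε·sup|f'| for all ℓ. -/

import Mathlib

open MeasureTheory Real Filter

-- helper: integrability of bounded, measurable, eventually-zero function on a subset of Ici a
lemma integrableOn_aux {h : ℝ → ℝ} {s : Set ℝ} {a B C : ℝ}
    (hsub : s ⊆ Set.Ici a) (hm : AEStronglyMeasurable h (volume.restrict s))
    (hs : MeasurableSet s)
    (hb : ∀ k ∈ s, |h k| ≤ C) (hz : ∀ k ∈ s, B < k → h k = 0) :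
    MeasureTheory.IntegrableOn h s := by
  have hbd : MeasureTheory.Integrable ((Set.Icc a B).indicator (fun _ => |C|))
      (volume.restrict s) := by
    apply MeasureTheory.Integrable.restrict
    rw [MeasureTheory.integrable_indicator_iff measurableSet_Icc]
    exact MeasureTheory.integrableOn_const measure_Icc_lt_top.ne
  apply MeasureTheory.Integrable.mono' hbd hm
  rw [MeasureTheory.ae_restrict_iff' hs]
  filter_upwards with k hk
  by_cases hkB : k ≤ B
  · have : k ∈ Set.Icc a B := ⟨hsub hk, hkB⟩
    rw [Set.indicator_of_mem this]
    exact (hb k hk).trans (le_abs_self C)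
  · rw [hz k hk (not_le.mp hkB)]
    simp [Set.indicator_apply]
    split <;> simp [abs_nonneg]

/-- If `f` is piecewise `C¹` (continuous, with one-sided derivatives everywhere
bounded by `M`) with compact support, then `ℓ ↦ p.v.∫ f(ℓ−k)/k dk` is
continuous, and the truncated integrals `F_ε` converge uniformly with
`|lim F_δ(ℓ) − F_ε(ℓ)| ≤ 2ε·M`. -/
theorem pv_continuous (f : ℝ → ℝ) (M : ℝ)
    (hf_cont : Continuous f) (hf_supp : HasCompactSupport f)
    (hr : ∀ x, ∃ d : ℝ, |d| ≤ M ∧ HasDerivWithinAt f d (Set.Ici x) x)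
    (hl : ∀ x, ∃ d : ℝ, |d| ≤ M ∧ HasDerivWithinAt f d (Set.Iic x) x) :
    ∃ G : ℝ → ℝ, Continuous G ∧
      (∀ ℓ : ℝ, Tendsto (fun ε : ℝ =>
          (∫ k in Set.Iic (-ε), f (ℓ - k) / k) + ∫ k in Set.Ici ε, f (ℓ - k) / k)
        (nhdsWithin 0 (Set.Ioi 0)) (nhds (G ℓ))) ∧
      (∀ ε : ℝ, 0 < ε → ∀ ℓ : ℝ,
        |G ℓ - ((∫ k in Set.Iic (-ε), f (ℓ - k) / k) + ∫ k in Set.Ici ε, f (ℓ - k) / k)|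
          ≤ 2 * ε * M) := by
  have hM0 : 0 ≤ M := by
    obtain ⟨d, hd, _⟩ := hr 0
    exact (abs_nonneg d).trans hd
  -- f is M-Lipschitz
  have hlip : ∀ x y : ℝ, |f y - f x| ≤ M * |y - x| := by
    have key : ∀ x y : ℝ, x ≤ y → |f y - f x| ≤ M * (y - x) := by
      intro x y hxy
      have := norm_image_sub_le_of_norm_deriv_right_le_segment
        (f := f) (f' := fun t => (hr t).choose) (a := x) (b := y)
        hf_cont.continuousOn
        (fun t _ => ((hr t).choose_spec).2)
        (fun t _ => by simpa [Real.norm_eq_abs] using ((hr t).choose_spec).1)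
        y (Set.right_mem_Icc.2 hxy)
      simpa [Real.norm_eq_abs] using this
    intro x y
    rcases le_total x y with h | h
    · simpa [abs_of_nonneg (sub_nonneg.2 h)] using key x y h
    · rw [abs_sub_comm, abs_sub_comm y x]
      simpa [abs_of_nonneg (sub_nonneg.2 h)] using key y x h
  obtain ⟨Cf, hCf⟩ := hf_supp.exists_bound_of_continuous hf_cont
  have hCf0 : 0 ≤ Cf := (norm_nonneg (f 0)).trans (hCf 0)
  obtain ⟨R, hR⟩ := hf_supp.isBounded.subset_closedBall 0
  have hf0 : ∀ x : ℝ, R < |x| → f x = 0 := by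
    intro x hx
    apply image_eq_zero_of_notMem_tsupport
    intro hmem
    have := hR hmem
    rw [Metric.mem_closedBall, Real.dist_eq, sub_zero] at this
    linarith
  set g : ℝ → ℝ → ℝ := fun ℓ k => (f (ℓ - k) - f (ℓ + k)) / k with hg_def
  have hg_meas : ∀ ℓ, Measurable (g ℓ) := fun ℓ =>
    ((hf_cont.measurable.comp (measurable_const.sub measurable_id)).sub
      (hf_cont.measurable.comp (measurable_const.add measurable_id))).div measurable_id
  have hg_bd : ∀ ℓ k : ℝ, 0 < k → |g ℓ k| ≤ 2 * M := by
    intro ℓ k hk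
    rw [hg_def]
    simp only
    rw [abs_div, abs_of_pos hk, div_le_iff₀ hk]
    calc |f (ℓ - k) - f (ℓ + k)| ≤ M * |(ℓ - k) - (ℓ + k)| := hlip (ℓ + k) (ℓ - k)
      _ = M * (2 * k) := by
          rw [show (ℓ - k) - (ℓ + k) = -(2 * k) by ring, abs_neg,
            abs_of_pos (by positivity)]
      _ = 2 * M * k := by ring
  have hz1 : ∀ ℓ k : ℝ, R + |ℓ| < k → f (ℓ - k) = 0 := by
    intro ℓ k h
    apply hf0
    have h1 : |k| - |ℓ| ≤ |k - ℓ| := abs_sub_abs_le_abs_sub k ℓ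
    have h2 : k ≤ |k| := le_abs_self k
    rw [abs_sub_comm] at h1
    linarith
  have hz2 : ∀ ℓ k : ℝ, R + |ℓ| < k → f (ℓ + k) = 0 := by
    intro ℓ k h
    apply hf0
    have h1 : |k| ≤ |ℓ + k| + |ℓ| := by
      calc |k| = |(ℓ + k) + -ℓ| := by congr 1; ring
        _ ≤ |ℓ + k| + |(-ℓ)| := abs_add_le _ _
        _ = |ℓ + k| + |ℓ| := by rw [abs_neg]
    have h2 : k ≤ |k| := le_abs_self k
    linarith
  have hg_zero : ∀ ℓ k : ℝ, R + |ℓ| < k → g ℓ k = 0 := by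
    intro ℓ k h
    rw [hg_def]
    simp only [hz1 ℓ k h, hz2 ℓ k h, sub_zero, zero_div]
  have hg_int : ∀ ℓ, MeasureTheory.IntegrableOn (g ℓ) (Set.Ioi 0) := fun ℓ =>
    integrableOn_aux (a := 0) (B := R + |ℓ|) (C := 2 * M) Set.Ioi_subset_Ici_self
      (hg_meas ℓ).aestronglyMeasurable measurableSet_Ioi
      (fun k hk => hg_bd ℓ k hk) (fun k _ hB => hg_zero ℓ k hB)
  set G : ℝ → ℝ := fun ℓ => ∫ k in Set.Ioi 0, g ℓ k with hG_def
  -- integrability of the two pieces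
  have hint1 : ∀ ε : ℝ, 0 < ε → ∀ ℓ : ℝ,
      MeasureTheory.IntegrableOn (fun k => f (ℓ - k) / k) (Set.Ici ε) := by
    intro ε hε ℓ
    apply integrableOn_aux (a := ε) (B := R + |ℓ|) (C := Cf / ε) le_rfl
      ((hf_cont.measurable.comp (measurable_const.sub measurable_id)).div
        measurable_id).aestronglyMeasurable measurableSet_Ici
    · intro k hk
      change |f (ℓ - k) / k| ≤ Cf / ε
      rw [abs_div]
      apply div_le_div₀ hCf0 (by simpa [Real.norm_eq_abs] using hCf (ℓ - k)) hε
      exact le_trans hk (le_abs_self k)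
    · intro k _ hB
      simp [hz1 ℓ k hB]
  have hint2 : ∀ ε : ℝ, 0 < ε → ∀ ℓ : ℝ,
      MeasureTheory.IntegrableOn (fun k => f (ℓ + k) / k) (Set.Ici ε) := by
    intro ε hε ℓ
    apply integrableOn_aux (a := ε) (B := R + |ℓ|) (C := Cf / ε) le_rfl
      ((hf_cont.measurable.comp (measurable_const.add measurable_id)).div
        measurable_id).aestronglyMeasurable measurableSet_Ici
    · intro k hk
      change |f (ℓ + k) / k| ≤ Cf / ε
      rw [abs_div]
      apply div_le_div₀ hCf0 (by simpa [Real.norm_eq_abs] using hCf (ℓ + k)) hε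
      exact le_trans hk (le_abs_self k)
    · intro k _ hB
      simp [hz2 ℓ k hB]
  -- the truncated integral as a one-sided integral
  have hF : ∀ ε : ℝ, 0 < ε → ∀ ℓ : ℝ,
      ((∫ k in Set.Iic (-ε), f (ℓ - k) / k) + ∫ k in Set.Ici ε, f (ℓ - k) / k)
        = ∫ k in Set.Ioi ε, g ℓ k := by
    intro ε hε ℓ
    have h1 : (∫ k in Set.Iic (-ε), f (ℓ - k) / k)
        = ∫ k in Set.Ioi ε, -(f (ℓ + k) / k) := by
      have h := integral_comp_neg_Iic (-ε) (fun k => -(f (ℓ + k) / k))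
      simp only [neg_neg] at h
      rw [← h]
      apply MeasureTheory.setIntegral_congr_fun measurableSet_Iic
      intro k _
      simp [sub_eq_add_neg, div_neg]
    have h2 : (∫ k in Set.Ici ε, f (ℓ - k) / k) = ∫ k in Set.Ioi ε, f (ℓ - k) / k :=
      MeasureTheory.integral_Ici_eq_integral_Ioi
    have hintA : MeasureTheory.IntegrableOn (fun k => f (ℓ - k) / k) (Set.Ioi ε) :=
      (hint1 ε hε ℓ).mono_set Set.Ioi_subset_Ici_self
    have hintB : MeasureTheory.IntegrableOn (fun k => f (ℓ + k) / k) (Set.Ioi ε) :=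
      (hint2 ε hε ℓ).mono_set Set.Ioi_subset_Ici_self
    rw [h1, h2, MeasureTheory.integral_neg, neg_add_eq_sub,
      ← MeasureTheory.integral_sub hintA hintB]
    apply MeasureTheory.setIntegral_congr_fun measurableSet_Ioi
    intro k _
    exact (sub_div _ _ _).symm
  -- the key bound
  have hbound : ∀ ε : ℝ, 0 < ε → ∀ ℓ : ℝ,
      |G ℓ - ((∫ k in Set.Iic (-ε), f (ℓ - k) / k) + ∫ k in Set.Ici ε, f (ℓ - k) / k)|
        ≤ 2 * ε * M := by
    intro ε hε ℓ
    rw [hF ε hε ℓ]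
    have hsplit : G ℓ = (∫ k in Set.Ioc 0 ε, g ℓ k) + ∫ k in Set.Ioi ε, g ℓ k := by
      rw [hG_def]
      simp only
      rw [← MeasureTheory.setIntegral_union
        (Set.Ioc_disjoint_Ioi le_rfl) measurableSet_Ioi
        ((hg_int ℓ).mono_set (Set.Ioc_subset_Ioi_self))
        ((hg_int ℓ).mono_set (Set.Ioi_subset_Ioi hε.le)),
        Set.Ioc_union_Ioi_eq_Ioi hε.le]
    rw [hsplit, add_sub_cancel_right]
    have hμ : volume (Set.Ioc (0:ℝ) ε) < ⊤ := by
      rw [Real.volume_Ioc]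
      exact ENNReal.ofReal_lt_top
    have := MeasureTheory.norm_setIntegral_le_of_norm_le_const_ae' (f := g ℓ)
      (C := 2 * M) hμ
      (Filter.Eventually.of_forall fun k hk => by
        simpa [Real.norm_eq_abs] using hg_bd ℓ k hk.1)
    rw [Real.norm_eq_abs, Measure.real, Real.volume_Ioc, sub_zero,
      ENNReal.toReal_ofReal hε.le] at this
    calc |∫ k in Set.Ioc 0 ε, g ℓ k| ≤ 2 * M * ε := this
      _ = 2 * ε * M := by ring
  refine ⟨G, ?_, ?_, hbound⟩
  · -- continuity
    rw [continuous_iff_continuousAt]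
    intro ℓ₀
    apply MeasureTheory.continuousAt_of_dominated
      (bound := (Set.Ioc 0 (R + |ℓ₀| + 1)).indicator fun _ => 2 * M)
    · exact Filter.Eventually.of_forall fun ℓ => (hg_meas ℓ).aestronglyMeasurable
    · filter_upwards [Metric.ball_mem_nhds ℓ₀ one_pos] with ℓ hℓ
      rw [MeasureTheory.ae_restrict_iff' measurableSet_Ioi]
      filter_upwards with k hk
      rw [Set.mem_Ioi] at hk
      have hℓ1 : |ℓ| ≤ |ℓ₀| + 1 := by
        rw [Metric.mem_ball, Real.dist_eq] at hℓ
        have := abs_sub_abs_le_abs_sub ℓ ℓ₀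
        linarith
      by_cases h : k ≤ R + |ℓ₀| + 1
      · rw [Set.indicator_of_mem (Set.mem_Ioc.mpr ⟨hk, h⟩), Real.norm_eq_abs]
        exact hg_bd ℓ k hk
      · rw [hg_zero ℓ k (by push_neg at h; linarith), norm_zero]
        apply Set.indicator_nonneg
        intro _ _
        positivity
    · apply MeasureTheory.Integrable.restrict
      rw [MeasureTheory.integrable_indicator_iff measurableSet_Ioc]
      exact MeasureTheory.integrableOn_const measure_Ioc_lt_top.ne
    · apply Filter.Eventually.of_forall
      intro k
      exact (((hf_cont.comp (continuous_id.sub continuous_const)).sub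
        (hf_cont.comp (continuous_id.add continuous_const))).div_const k).continuousAt
  · -- convergence
    intro ℓ
    rw [tendsto_iff_dist_tendsto_zero]
    have h0 : Filter.Tendsto (fun ε : ℝ => 2 * ε * M) (nhdsWithin 0 (Set.Ioi 0)) (nhds 0) := by
      have h : Filter.Tendsto (fun ε : ℝ => 2 * ε * M) (nhds 0) (nhds 0) := by
        have hc : Continuous (fun ε : ℝ => 2 * ε * M) := by continuity
        simpa using hc.tendsto 0
      exact h.mono_left nhdsWithin_le_nhds
    have h1 : ∀ᶠ ε in nhdsWithin (0:ℝ) (Set.Ioi 0),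
        dist ((∫ k in Set.Iic (-ε), f (ℓ - k) / k) + ∫ k in Set.Ici ε, f (ℓ - k) / k) (G ℓ)
          ≤ 2 * ε * M := by
      filter_upwards [self_mem_nhdsWithin] with ε (hε : ε ∈ Set.Ioi 0)
      rw [Real.dist_eq, abs_sub_comm]
      exact hbound ε hε ℓ
    exact squeeze_zero' (Filter.Eventually.of_forall fun _ => dist_nonneg) h1 h0
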